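/- Let arc be the arcsine distribution on [-π,π] and let h(t) = m sin(πt) for m ∈ [0,1]. Define J(h) = (1/2)∫₀¹ D_arc(s(t))√(1 - h(t)²) dt with s(t) = h'(t)/√(1 - h(t)²) and D_arc(c) = (2/π)(c arcsin(c/π) + √(π² - c²)). Then J(h) = 1 for every m ∈ [0,1]. -/

import Mathlib

open MeasureTheory Real

/-- `D` for the arcsine distribution on `[-π, π]`:
`D_arc(c) = (2/π) (c arcsin(c/π) + √(π² - c²))`. -/
noncomputable def Darc (c : ℝ) : ℝ :=
  (2 / π) * (c * Real.arcsin (c / π) + Real.sqrt (π ^ 2 - c ^ 2))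

lemma Qpos (m : ℝ) (hm1 : m ^ 2 < 1) (t : ℝ) : 0 < 1 - m ^ 2 * Real.sin (π * t) ^ 2 := by
  nlinarith [Real.sin_sq_le_one (π * t), sq_nonneg m, sq_nonneg (Real.sin (π * t))]

lemma darc_eq (m : ℝ) (hm1 : m ^ 2 < 1) (t : ℝ) :
    Darc (π * m * Real.cos (π * t) / Real.sqrt (1 - m ^ 2 * Real.sin (π * t) ^ 2)) *
        Real.sqrt (1 - m ^ 2 * Real.sin (π * t) ^ 2)
      = 2 * m * Real.cos (π * t) *
          Real.arcsin (m * Real.cos (π * t) / Real.sqrt (1 - m ^ 2 * Real.sin (π * t) ^ 2))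
        + 2 * Real.sqrt (1 - m ^ 2) := by
  have hQ := Qpos m hm1 t
  have hsQ : 0 < Real.sqrt (1 - m ^ 2 * Real.sin (π * t) ^ 2) := Real.sqrt_pos.2 hQ
  have h1 : π * m * Real.cos (π * t) / Real.sqrt (1 - m ^ 2 * Real.sin (π * t) ^ 2) / π
      = m * Real.cos (π * t) / Real.sqrt (1 - m ^ 2 * Real.sin (π * t) ^ 2) := by
    field_simp
  have h2 : π ^ 2 - (π * m * Real.cos (π * t) / Real.sqrt (1 - m ^ 2 * Real.sin (π * t) ^ 2)) ^ 2
      = π ^ 2 * (1 - m ^ 2) / (1 - m ^ 2 * Real.sin (π * t) ^ 2) := by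
    rw [div_pow, Real.sq_sqrt hQ.le]
    rw [eq_div_iff hQ.ne', sub_mul, div_mul_cancel₀ _ hQ.ne']
    linear_combination (-(π ^ 2 * m ^ 2)) * Real.cos_sq' (π * t)
  have h3 : Real.sqrt (π ^ 2 * (1 - m ^ 2) / (1 - m ^ 2 * Real.sin (π * t) ^ 2))
      = π * Real.sqrt (1 - m ^ 2) / Real.sqrt (1 - m ^ 2 * Real.sin (π * t) ^ 2) := by
    rw [Real.sqrt_div (mul_nonneg (sq_nonneg π) (by linarith)), Real.sqrt_mul (sq_nonneg π), Real.sqrt_sq Real.pi_pos.le]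
  unfold Darc
  rw [h1, h2, h3]
  field_simp

lemma hasDeriv_sin (t : ℝ) : HasDerivAt (fun t : ℝ => Real.sin (π * t)) (π * Real.cos (π * t)) t := by
  have := (Real.hasDerivAt_sin (π * t)).comp t ((hasDerivAt_id t).const_mul π)
  simpa [Function.comp_def, mul_comm] using this

lemma hasDeriv_cos (t : ℝ) : HasDerivAt (fun t : ℝ => Real.cos (π * t)) (-(π * Real.sin (π * t))) t := by
  have := (Real.hasDerivAt_cos (π * t)).comp t ((hasDerivAt_id t).const_mul π)
  refine this.congr_deriv ?_ <;> simp [Function.comp_def] <;> ring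

lemma hasDeriv_Q (m t : ℝ) : HasDerivAt (fun t : ℝ => 1 - m ^ 2 * Real.sin (π * t) ^ 2)
    (-(2 * π * m ^ 2 * Real.sin (π * t) * Real.cos (π * t))) t := by
  have := (((hasDeriv_sin t).pow 2).const_mul (m ^ 2)).const_sub 1
  refine this.congr_deriv ?_ <;> simp [Function.comp_def] <;> ring

lemma hasDeriv_sqrtQ (m : ℝ) (hm1 : m ^ 2 < 1) (t : ℝ) :
    HasDerivAt (fun t : ℝ => Real.sqrt (1 - m ^ 2 * Real.sin (π * t) ^ 2))
      (-(π * m ^ 2 * Real.sin (π * t) * Real.cos (π * t)) /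
        Real.sqrt (1 - m ^ 2 * Real.sin (π * t) ^ 2)) t := by
  have hQ : 0 < 1 - m ^ 2 * Real.sin (π * t) ^ 2 := by
    nlinarith [Real.sin_sq_le_one (π * t), sq_nonneg m, sq_nonneg (Real.sin (π * t))]
  have hsQ : 0 < Real.sqrt (1 - m ^ 2 * Real.sin (π * t) ^ 2) := Real.sqrt_pos.2 hQ
  have := (hasDeriv_Q m t).sqrt hQ.ne'
  refine this.congr_deriv ?_
  field_simp

lemma hasDeriv_w (m : ℝ) (hm1 : m ^ 2 < 1) (t : ℝ) :
    HasDerivAt (fun t : ℝ => m * Real.cos (π * t) / Real.sqrt (1 - m ^ 2 * Real.sin (π * t) ^ 2))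
      (-(π * m * Real.sin (π * t)) * (1 - m ^ 2) /
        ((1 - m ^ 2 * Real.sin (π * t) ^ 2) * Real.sqrt (1 - m ^ 2 * Real.sin (π * t) ^ 2))) t := by
  have hQ : 0 < 1 - m ^ 2 * Real.sin (π * t) ^ 2 := by
    nlinarith [Real.sin_sq_le_one (π * t), sq_nonneg m, sq_nonneg (Real.sin (π * t))]
  have hsQ : 0 < Real.sqrt (1 - m ^ 2 * Real.sin (π * t) ^ 2) := Real.sqrt_pos.2 hQ
  have hr : Real.sqrt (1 - m ^ 2 * Real.sin (π * t) ^ 2) ^ 2 = 1 - m ^ 2 * Real.sin (π * t) ^ 2 :=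
    Real.sq_sqrt hQ.le
  have := ((hasDeriv_cos t).const_mul m).div (hasDeriv_sqrtQ m hm1 t) hsQ.ne'
  refine this.congr_deriv ?_
  rw [hr]
  field_simp
  linear_combination (-(m * Real.sin (π * t))) * hr + (m ^ 3 * Real.sin (π * t)) * Real.sin_sq_add_cos_sq (π * t)

lemma hasDeriv_arcsin_w (m : ℝ) (hm1 : m ^ 2 < 1) (t : ℝ) :
    HasDerivAt (fun t : ℝ =>
        Real.arcsin (m * Real.cos (π * t) / Real.sqrt (1 - m ^ 2 * Real.sin (π * t) ^ 2)))
      (-(π * m * Real.sqrt (1 - m ^ 2) * Real.sin (π * t)) / (1 - m ^ 2 * Real.sin (π * t) ^ 2)) t := by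
  have hQ : 0 < 1 - m ^ 2 * Real.sin (π * t) ^ 2 := by
    nlinarith [Real.sin_sq_le_one (π * t), sq_nonneg m, sq_nonneg (Real.sin (π * t))]
  have hsQ : 0 < Real.sqrt (1 - m ^ 2 * Real.sin (π * t) ^ 2) := Real.sqrt_pos.2 hQ
  have hw2 : 1 - (m * Real.cos (π * t) / Real.sqrt (1 - m ^ 2 * Real.sin (π * t) ^ 2)) ^ 2
      = (1 - m ^ 2) / (1 - m ^ 2 * Real.sin (π * t) ^ 2) := by
    rw [div_pow, Real.sq_sqrt hQ.le, eq_div_iff hQ.ne', sub_mul, div_mul_cancel₀ _ hQ.ne']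
    linear_combination (-(m ^ 2)) * Real.cos_sq' (π * t)
  have hw2pos : (0:ℝ) < 1 - (m * Real.cos (π * t) / Real.sqrt (1 - m ^ 2 * Real.sin (π * t) ^ 2)) ^ 2 := by
    rw [hw2]; exact div_pos (by nlinarith) hQ
  have hne1 : m * Real.cos (π * t) / Real.sqrt (1 - m ^ 2 * Real.sin (π * t) ^ 2) ≠ -1 := by
    intro h; rw [h] at hw2pos; norm_num at hw2pos
  have hne2 : m * Real.cos (π * t) / Real.sqrt (1 - m ^ 2 * Real.sin (π * t) ^ 2) ≠ 1 := by
    intro h; rw [h] at hw2pos; norm_num at hw2pos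
  have := (Real.hasDerivAt_arcsin hne1 hne2).comp t (hasDeriv_w m hm1 t)
  refine this.congr_deriv ?_
  rw [hw2, Real.sqrt_div (by nlinarith) _]
  have hk : Real.sqrt (1 - m ^ 2) ^ 2 = 1 - m ^ 2 := Real.sq_sqrt (by nlinarith)
  have hk0 : 0 < Real.sqrt (1 - m ^ 2) := Real.sqrt_pos.2 (by nlinarith)
  field_simp
  linear_combination (m * Real.sin (π * t)) * hk

lemma hasDeriv_sin2 (t : ℝ) : HasDerivAt (fun t : ℝ => Real.sin (2 * (π * t)))
    (2 * π * Real.cos (2 * (π * t))) t := by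
  have := (Real.hasDerivAt_sin (2 * (π * t))).comp t
    (((hasDerivAt_id t).const_mul π).const_mul 2)
  refine this.congr_deriv ?_
  ring

lemma hasDeriv_cos2 (t : ℝ) : HasDerivAt (fun t : ℝ => Real.cos (2 * (π * t)))
    (-(2 * π * Real.sin (2 * (π * t)))) t := by
  have := (Real.hasDerivAt_cos (2 * (π * t))).comp t
    (((hasDerivAt_id t).const_mul π).const_mul 2)
  refine this.congr_deriv ?_
  ring

lemma hasDeriv_atan_part (m : ℝ) (hm0 : 0 ≤ m) (hm1 : m ^ 2 < 1) (t : ℝ) :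
    HasDerivAt (fun t : ℝ => 2 / π * Real.arctan ((Real.sqrt (1 - m ^ 2) - 1) * Real.sin (2 * (π * t)) /
        ((1 + Real.sqrt (1 - m ^ 2)) + (1 - Real.sqrt (1 - m ^ 2)) * Real.cos (2 * (π * t)))))
      (2 * Real.sqrt (1 - m ^ 2) / (1 - m ^ 2 * Real.sin (π * t) ^ 2) - 2) t := by
  set k := Real.sqrt (1 - m ^ 2) with hkdef
  have hk : k ^ 2 = 1 - m ^ 2 := Real.sq_sqrt (by nlinarith)
  have hk0 : 0 < k := Real.sqrt_pos.2 (by nlinarith)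
  have hk1 : k ≤ 1 := Real.sqrt_le_one.2 (by nlinarith)
  have hQ : 0 < 1 - m ^ 2 * Real.sin (π * t) ^ 2 := by
    nlinarith [Real.sin_sq_le_one (π * t), sq_nonneg m, sq_nonneg (Real.sin (π * t))]
  have hD : (1 + k) + (1 - k) * Real.cos (2 * (π * t)) ≠ 0 := by
    have := Real.neg_one_le_cos (2 * (π * t))
    nlinarith
  have hnum := (hasDeriv_sin2 t).const_mul (k - 1)
  have hden := ((hasDeriv_cos2 t).const_mul (1 - k)).const_add (1 + k)
  have hP := hnum.div hden hD
  have := ((Real.hasDerivAt_arctan _).comp t hP).const_mul (2 / π)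
  refine this.congr_deriv ?_
  have hc2 : Real.cos (2 * (π * t)) = 1 - 2 * Real.sin (π * t) ^ 2 := by
    rw [Real.cos_two_mul', Real.cos_sq']; ring
  have hm2k : m ^ 2 = 1 - k ^ 2 := by linarith
  simp only [Function.comp_def, Pi.div_apply, Real.sin_two_mul, hc2, hm2k]
  have hD' : (0:ℝ) < (1 + k) + (1 - k) * (1 - 2 * Real.sin (π * t) ^ 2) := by
    nlinarith [Real.sin_sq_le_one (π * t), sq_nonneg (Real.sin (π * t))]
  have hone : (0:ℝ) < 1 + ((k - 1) * (2 * Real.sin (π * t) * Real.cos (π * t)) /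
      ((1 + k) + (1 - k) * (1 - 2 * Real.sin (π * t) ^ 2))) ^ 2 := by positivity
  have hQ' : (0:ℝ) < 1 - (1 - k ^ 2) * Real.sin (π * t) ^ 2 := by rw [← hm2k]; exact hQ
  field_simp
  have hq : (1:ℝ) - Real.sin (π * t) ^ 2 * (1 - k ^ 2) ≠ 0 := by nlinarith [hQ']
  rw [Real.cos_sq' (π * t), div_sub_one hq, mul_div_assoc', eq_div_iff hq]
  ring

lemma hasDeriv_G (m : ℝ) (hm0 : 0 ≤ m) (hm1 : m ^ 2 < 1) (t : ℝ) :
    HasDerivAt (fun t : ℝ =>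
        2 * m / π * (Real.sin (π * t) *
          Real.arcsin (m * Real.cos (π * t) / Real.sqrt (1 - m ^ 2 * Real.sin (π * t) ^ 2)))
        + 2 * t
        + 2 / π * Real.arctan ((Real.sqrt (1 - m ^ 2) - 1) * Real.sin (2 * (π * t)) /
            ((1 + Real.sqrt (1 - m ^ 2)) + (1 - Real.sqrt (1 - m ^ 2)) * Real.cos (2 * (π * t)))))
      (2 * m * Real.cos (π * t) *
          Real.arcsin (m * Real.cos (π * t) / Real.sqrt (1 - m ^ 2 * Real.sin (π * t) ^ 2))
        + 2 * Real.sqrt (1 - m ^ 2)) t := by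
  have hQ : 0 < 1 - m ^ 2 * Real.sin (π * t) ^ 2 := by
    nlinarith [Real.sin_sq_le_one (π * t), sq_nonneg m, sq_nonneg (Real.sin (π * t))]
  have h1 := ((hasDeriv_sin t).mul (hasDeriv_arcsin_w m hm1 t)).const_mul (2 * m / π)
  have h2 := (hasDerivAt_id t).const_mul (2 : ℝ)
  have h3 := hasDeriv_atan_part m hm0 hm1 t
  have := (h1.add h2).add h3
  refine this.congr_deriv ?_
  field_simp
  ring

lemma darc'_pi : Darc π = π := by
  unfold Darc
  rw [div_self Real.pi_ne_zero, Real.arcsin_one, sub_self, Real.sqrt_zero]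
  field_simp; ring

lemma darc'_negpi : Darc (-π) = π := by
  unfold Darc
  rw [neg_div, div_self Real.pi_ne_zero, Real.arcsin_neg, Real.arcsin_one]
  have : π ^ 2 - (-π) ^ 2 = 0 := by ring
  rw [this, Real.sqrt_zero]
  field_simp; ring

lemma m1_pointwise (t : ℝ) :
    Darc (π * 1 * Real.cos (π * t) / Real.sqrt (1 - 1 ^ 2 * Real.sin (π * t) ^ 2)) *
        Real.sqrt (1 - 1 ^ 2 * Real.sin (π * t) ^ 2) = π * |Real.cos (π * t)| := by
  have h1 : (1:ℝ) - 1 ^ 2 * Real.sin (π * t) ^ 2 = Real.cos (π * t) ^ 2 := by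
    rw [Real.cos_sq']; ring
  rw [h1, Real.sqrt_sq_eq_abs]
  rcases lt_trichotomy (Real.cos (π * t)) 0 with h | h | h
  · rw [abs_of_neg h]
    have harg : π * 1 * Real.cos (π * t) / -Real.cos (π * t) = -π := by
      rw [mul_one, div_neg, mul_div_assoc, div_self h.ne, mul_one]
    rw [harg, darc'_negpi]
  · rw [h]; simp
  · rw [abs_of_pos h]
    have harg : π * 1 * Real.cos (π * t) / Real.cos (π * t) = π := by
      rw [mul_one, mul_div_assoc, div_self h.ne', mul_one]
    rw [harg, darc'_pi]

lemma integral_abs_cos : ∫ t in Set.Icc (0:ℝ) 1, π * |Real.cos (π * t)| = 2 := by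
  have hc : Continuous fun t : ℝ => π * |Real.cos (π * t)| := by fun_prop
  rw [MeasureTheory.integral_Icc_eq_integral_Ioc, ← intervalIntegral.integral_of_le zero_le_one]
  rw [← intervalIntegral.integral_add_adjacent_intervals (b := (1:ℝ)/2)
    (hc.intervalIntegrable 0 (1/2)) (hc.intervalIntegrable (1/2) 1)]
  have e1 : ∫ t in (0:ℝ)..(1/2), π * |Real.cos (π * t)| = ∫ t in (0:ℝ)..(1/2), π * Real.cos (π * t) := by
    apply intervalIntegral.integral_congr
    intro x hx
    rw [Set.uIcc_of_le (by norm_num)] at hx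
    obtain ⟨h0, h1⟩ := hx
    have : 0 ≤ Real.cos (π * x) := Real.cos_nonneg_of_mem_Icc
      ⟨by nlinarith [Real.pi_pos], by nlinarith [Real.pi_pos]⟩
    simp [abs_of_nonneg this]
  have e2 : ∫ t in ((1:ℝ)/2)..(1:ℝ), π * |Real.cos (π * t)| = ∫ t in ((1:ℝ)/2)..(1:ℝ), -(π * Real.cos (π * t)) := by
    apply intervalIntegral.integral_congr
    intro x hx
    rw [Set.uIcc_of_le (by norm_num)] at hx
    obtain ⟨h0, h1⟩ := hx
    have : Real.cos (π * x) ≤ 0 := Real.cos_nonpos_of_pi_div_two_le_of_le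
      (by nlinarith [Real.pi_pos]) (by nlinarith [Real.pi_pos])
    simp [abs_of_nonpos this]
  rw [e1, e2]
  rw [intervalIntegral.integral_eq_sub_of_hasDerivAt (f := fun t => Real.sin (π * t))
    (fun x _ => hasDeriv_sin x) ((by fun_prop : Continuous fun t : ℝ => π * Real.cos (π * t)).intervalIntegrable _ _)]
  rw [intervalIntegral.integral_eq_sub_of_hasDerivAt (f := fun t => -Real.sin (π * t))
    (fun x _ => (hasDeriv_sin x).neg) (((by fun_prop : Continuous fun t : ℝ => π * Real.cos (π * t)).neg).intervalIntegrable _ _)]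
  have : π * (1/2 : ℝ) = π / 2 := by ring
  rw [this]
  norm_num [Real.sin_pi_div_two, Real.sin_pi]

/-- For the sine path `h(t) = m sin(πt)` with `m ∈ [0, 1]`, local speed
`s(t) = h'(t)/√(1 - h(t)²)`, the arcsine flux
`J(h) = (1/2) ∫₀¹ D_arc(s(t)) √(1 - h(t)²) dt` equals `1`. -/
theorem sine_path_flux_eq_one (m : ℝ) (hm : m ∈ Set.Icc (0 : ℝ) 1) :
    (1 / 2) * ∫ t in Set.Icc (0 : ℝ) 1,
        Darc (π * m * Real.cos (π * t) / Real.sqrt (1 - m ^ 2 * Real.sin (π * t) ^ 2)) *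
          Real.sqrt (1 - m ^ 2 * Real.sin (π * t) ^ 2) = 1 := by
  obtain ⟨hm0, hm1⟩ := hm
  rcases eq_or_lt_of_le hm1 with h1 | h1
  · subst h1
    simp only [m1_pointwise]
    rw [integral_abs_cos]
    norm_num
  · have hm2 : m ^ 2 < 1 := by nlinarith
    have key : ∀ t : ℝ, Darc (π * m * Real.cos (π * t) / Real.sqrt (1 - m ^ 2 * Real.sin (π * t) ^ 2)) *
          Real.sqrt (1 - m ^ 2 * Real.sin (π * t) ^ 2)
        = 2 * m * Real.cos (π * t) *
            Real.arcsin (m * Real.cos (π * t) / Real.sqrt (1 - m ^ 2 * Real.sin (π * t) ^ 2))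
          + 2 * Real.sqrt (1 - m ^ 2) := fun t => darc_eq m hm2 t
    simp only [key]
    have cQ : Continuous fun t : ℝ => Real.sqrt (1 - m ^ 2 * Real.sin (π * t) ^ 2) :=
      (by fun_prop : Continuous fun t : ℝ => 1 - m ^ 2 * Real.sin (π * t) ^ 2).sqrt
    have cw : Continuous fun t : ℝ => m * Real.cos (π * t) / Real.sqrt (1 - m ^ 2 * Real.sin (π * t) ^ 2) := by
      apply Continuous.div (by fun_prop) cQ
      intro t
      exact (Real.sqrt_pos.2 (Qpos m hm2 t)).ne'
    have cf : Continuous fun t : ℝ => 2 * m * Real.cos (π * t) *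
        Real.arcsin (m * Real.cos (π * t) / Real.sqrt (1 - m ^ 2 * Real.sin (π * t) ^ 2))
        + 2 * Real.sqrt (1 - m ^ 2) :=
      (((by fun_prop : Continuous fun t : ℝ => 2 * m * Real.cos (π * t))).mul
        (Real.continuous_arcsin.comp cw)).add continuous_const
    rw [MeasureTheory.integral_Icc_eq_integral_Ioc, ← intervalIntegral.integral_of_le zero_le_one]
    rw [intervalIntegral.integral_eq_sub_of_hasDerivAt
      (fun t _ => hasDeriv_G m hm0 hm2 t) (cf.intervalIntegrable 0 1)]
    norm_num [Real.sin_pi, Real.sin_two_pi, Real.arctan_zero]
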